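/- For any matroid M of rank k on the cyclically ordered ground set [n] with Grassmann necklace (I_1, ..., I_n), every basis B of M satisfies I_i ≤_i B in the Gale order for every i ∈ [n]. -/

import Mathlib

open Finset

/-- A matroid on a finite ground set, presented by its rank function. -/
structure RankMatroid (α : Type*) [DecidableEq α] [Fintype α] where
  rk : Finset α → ℕ
  rk_empty : rk ∅ = 0
  rk_le_insert : ∀ (A : Finset α) (x : α), rk A ≤ rk (insert x A)
  insert_le : ∀ (A : Finset α) (x : α), rk (insert x A) ≤ rk A + 1
  submodular : ∀ A B : Finset α, rk (A ∪ B) + rk (A ∩ B) ≤ rk A + rk B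

namespace RankMatroid

variable {α : Type*} [DecidableEq α] [Fintype α] (M : RankMatroid α)

def Indep (S : Finset α) : Prop := M.rk S = S.card

def IsBase (B : Finset α) : Prop := M.Indep B ∧ B.card = M.rk Finset.univ

end RankMatroid

variable {n : ℕ}

/-- The position of `x` in the linear order `<_i` on the cyclically ordered set
`[n] = Fin n` starting at `i`. -/
def shiftVal (i x : Fin n) : ℕ := ((x - i : Fin n) : ℕ)

/-- The Gale (dominance) order with respect to `<_i`: `A ≤_i B` iff for every
threshold `x`, `B` has at most as many elements `≤_i x` as `A` does; for sets
of equal size this is equivalent to the componentwise comparison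
`A^(j) ≤_i B^(j)` of the `<_i`-sorted lists. -/
def GaleLE (i : Fin n) (A B : Finset (Fin n)) : Prop :=
  ∀ x : Fin n,
    (B.filter fun b => shiftVal i b ≤ shiftVal i x).card ≤
      (A.filter fun a => shiftVal i a ≤ shiftVal i x).card

/-- `I` is the `<_i`-lexicographically minimal base of `M` (the `i`-th
Grassmann necklace element): for every other base `B`, the `<_i`-smallest
element where `I` and `B` differ lies in `I`. -/
def LexMinBase (M : RankMatroid (Fin n)) (i : Fin n) (I : Finset (Fin n)) : Prop :=
  M.IsBase I ∧ ∀ B : Finset (Fin n), M.IsBase B → B ≠ I →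
    ∃ m ∈ I, m ∉ B ∧ ∀ x : Fin n, shiftVal i x < shiftVal i m → (x ∈ I ↔ x ∈ B)

namespace RankMatroid

variable {α : Type*} [DecidableEq α] [Fintype α] (M : RankMatroid α)

lemma rk_le_card (A : Finset α) : M.rk A ≤ A.card := by
  classical
  induction A using Finset.induction_on with
  | empty => simp [M.rk_empty]
  | insert x s hx ih =>
    calc M.rk (insert x s) ≤ M.rk s + 1 := M.insert_le s x
    _ ≤ s.card + 1 := by omega
    _ = (insert x s).card := (Finset.card_insert_of_notMem hx).symm

lemma rk_mono {A B : Finset α} (h : A ⊆ B) : M.rk A ≤ M.rk B := by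
  classical
  have key : ∀ S : Finset α, M.rk A ≤ M.rk (A ∪ S) := by
    intro S
    induction S using Finset.induction_on with
    | empty => simp
    | insert x s hx ih =>
      calc M.rk A ≤ M.rk (A ∪ s) := ih
      _ ≤ M.rk (insert x (A ∪ s)) := M.rk_le_insert _ x
      _ = M.rk (A ∪ insert x s) := by rw [Finset.union_insert]
  calc M.rk A ≤ M.rk (A ∪ B) := key B
  _ = M.rk B := by rw [Finset.union_eq_right.mpr h]

lemma rk_union_le {A S : Finset α} : M.rk (A ∪ S) ≤ M.rk A + S.card := by
  classical
  induction S using Finset.induction_on with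
  | empty => simp
  | insert x s hx ih =>
    calc M.rk (A ∪ insert x s) = M.rk (insert x (A ∪ s)) := by rw [Finset.union_insert]
    _ ≤ M.rk (A ∪ s) + 1 := M.insert_le _ x
    _ ≤ M.rk A + s.card + 1 := by omega
    _ = M.rk A + (insert x s).card := by rw [Finset.card_insert_of_notMem hx]; omega

lemma indep_subset {S T : Finset α} (hS : M.Indep S) (hT : T ⊆ S) : M.Indep T := by
  classical
  have h1 : S = T ∪ (S \ T) := by rw [Finset.union_sdiff_of_subset hT]
  have h2 : M.rk S ≤ M.rk T + (S \ T).card := by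
    conv_lhs => rw [h1]
    exact M.rk_union_le
  have h3 : (S \ T).card = S.card - T.card := Finset.card_sdiff_of_subset hT
  have h4 : T.card ≤ S.card := Finset.card_le_card hT
  have h5 : M.rk S = S.card := hS
  have h6 : M.rk T ≤ T.card := M.rk_le_card T
  have : T.card ≤ M.rk T := by omega
  exact le_antisymm h6 this

/-- If every element of `S` doesn't increase the rank of `A`, then `S` is in the
span of `A`. -/
lemma rk_union_eq_of_forall {A S : Finset α}
    (h : ∀ x ∈ S, M.rk (insert x A) = M.rk A) : M.rk (A ∪ S) = M.rk A := by
  classical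
  induction S using Finset.induction_on with
  | empty => simp
  | insert x s hx ih =>
    have hih : M.rk (A ∪ s) = M.rk A := ih (fun y hy => h y (Finset.mem_insert_of_mem hy))
    have hxA : M.rk (insert x A) = M.rk A := h x (Finset.mem_insert_self x s)
    have hsub := M.submodular (insert x A) (A ∪ s)
    have hU : (insert x A) ∪ (A ∪ s) = insert x (A ∪ s) := by
      ext y; simp [Finset.mem_insert, Finset.mem_union]
    have hIsub : A ⊆ (insert x A) ∩ (A ∪ s) := by
      intro y hy
      simp [Finset.mem_inter, Finset.mem_insert, Finset.mem_union, hy]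
    have hIrk : M.rk A ≤ M.rk ((insert x A) ∩ (A ∪ s)) := M.rk_mono hIsub
    rw [hU] at hsub
    have hle : M.rk (insert x (A ∪ s)) ≤ M.rk A := by omega
    have hge : M.rk A ≤ M.rk (insert x (A ∪ s)) := by
      calc M.rk A = M.rk (A ∪ s) := hih.symm
      _ ≤ M.rk (insert x (A ∪ s)) := M.rk_le_insert _ x
    have : M.rk (insert x (A ∪ s)) = M.rk A := le_antisymm hle hge
    calc M.rk (A ∪ insert x s) = M.rk (insert x (A ∪ s)) := by rw [Finset.union_insert]
    _ = M.rk A := this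

/-- Augmentation: an independent set of rank smaller than `rk S` can be
augmented by an element of `S`. -/
lemma augment {J S : Finset α} (hJ : M.Indep J) (h : M.rk J < M.rk S) :
    ∃ x ∈ S, x ∉ J ∧ M.Indep (insert x J) := by
  classical
  by_contra hcon
  push_neg at hcon
  have key : ∀ x ∈ S, M.rk (insert x J) = M.rk J := by
    intro x hx
    by_cases hxJ : x ∈ J
    · rw [Finset.insert_eq_self.mpr hxJ]
    · have h1 : M.rk (insert x J) ≤ M.rk J + 1 := M.insert_le J x
      have h2 : M.rk J ≤ M.rk (insert x J) := M.rk_le_insert J x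
      have h3 : ¬ M.Indep (insert x J) := hcon x hx hxJ
      have hc : (insert x J).card = J.card + 1 := Finset.card_insert_of_notMem hxJ
      have h4 : M.rk (insert x J) ≤ (insert x J).card := M.rk_le_card _
      unfold RankMatroid.Indep at h3 hJ
      omega
  have := M.rk_union_eq_of_forall key
  have hmono : M.rk S ≤ M.rk (J ∪ S) := M.rk_mono Finset.subset_union_right
  omega

/-- Any independent set extends to a base using elements of a given base. -/
lemma extend_to_base {J I0 : Finset α} (hJ : M.Indep J) (hI0 : M.IsBase I0) :
    ∃ B, M.IsBase B ∧ J ⊆ B ∧ B ⊆ J ∪ I0 := by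
  classical
  obtain ⟨hI0i, hI0c⟩ := hI0
  have main : ∀ k : ℕ, ∀ J : Finset α, M.Indep J → M.rk Finset.univ - J.card ≤ k →
      ∃ B, M.IsBase B ∧ J ⊆ B ∧ B ⊆ J ∪ I0 := by
    intro k
    induction k with
    | zero =>
      intro J hJ hk
      refine ⟨J, ⟨hJ, ?_⟩, Finset.Subset.refl J, Finset.subset_union_left⟩
      have h1 : M.rk J ≤ M.rk Finset.univ := M.rk_mono (Finset.subset_univ J)
      unfold RankMatroid.Indep at hJ
      omega
    | succ k ih =>
      intro J hJ hk
      by_cases hcase : J.card = M.rk Finset.univ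
      · exact ⟨J, ⟨hJ, hcase⟩, Finset.Subset.refl J, Finset.subset_union_left⟩
      · have hlt : J.card < M.rk Finset.univ := by
          have h1 : M.rk J ≤ M.rk Finset.univ := M.rk_mono (Finset.subset_univ J)
          unfold RankMatroid.Indep at hJ
          omega
        have hrkU : M.rk J < M.rk (J ∪ I0) := by
          have h1 : M.rk I0 ≤ M.rk (J ∪ I0) := M.rk_mono Finset.subset_union_right
          unfold RankMatroid.Indep at hJ hI0i
          omega
        obtain ⟨x, hxS, hxJ, hxi⟩ := M.augment hJ hrkU
        have hcard : (insert x J).card = J.card + 1 := Finset.card_insert_of_notMem hxJ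
        obtain ⟨B, hB, hsub1, hsub2⟩ := ih (insert x J) hxi (by omega)
        refine ⟨B, hB, ?_, ?_⟩
        · exact (Finset.subset_insert x J).trans hsub1
        · refine hsub2.trans ?_
          intro y hy
          rcases Finset.mem_union.mp hy with hy | hy
          · rcases Finset.mem_insert.mp hy with rfl | hy
            · rcases Finset.mem_union.mp hxS with h | h
              · exact Finset.mem_union_left _ h
              · exact Finset.mem_union_right _ h
            · exact Finset.mem_union_left _ hy
          · exact Finset.mem_union_right _ hy
  exact main (M.rk Finset.univ) J hJ (by omega)

end RankMatroid

/-- The rank of a prefix set equals the number of elements of the lex-minimal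
base in that prefix. -/
lemma lexmin_prefix_rank (M : RankMatroid (Fin n)) (i : Fin n) (I : Finset (Fin n))
    (hI : LexMinBase M i I) (x : Fin n) :
    M.rk (Finset.univ.filter fun y => shiftVal i y ≤ shiftVal i x) =
      (I.filter fun a => shiftVal i a ≤ shiftVal i x).card := by
  classical
  obtain ⟨hIbase, hlex⟩ := hI
  set P : Finset (Fin n) := Finset.univ.filter fun y => shiftVal i y ≤ shiftVal i x with hP
  have hIP : I.filter (fun a => shiftVal i a ≤ shiftVal i x) = I ∩ P := by
    ext y; simp [hP, Finset.mem_filter, Finset.mem_inter]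
  rw [hIP]
  have hJ : M.Indep (I ∩ P) := M.indep_subset hIbase.1 Finset.inter_subset_left
  have hge : (I ∩ P).card ≤ M.rk P := by
    calc (I ∩ P).card = M.rk (I ∩ P) := hJ.symm
    _ ≤ M.rk P := M.rk_mono Finset.inter_subset_right
  rcases eq_or_lt_of_le hge with heq | hlt
  · exact heq.symm
  · exfalso
    have hrkJ : M.rk (I ∩ P) < M.rk P := by rw [hJ]; exact hlt
    obtain ⟨y, hyP, hyJ, hyi⟩ := M.augment hJ hrkJ
    have hyI : y ∉ I := fun hyI => hyJ (Finset.mem_inter.mpr ⟨hyI, hyP⟩)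
    obtain ⟨B', hB', hsub1, hsub2⟩ := M.extend_to_base hyi ⟨hIbase.1, hIbase.2⟩
    have hBne : B' ≠ I := by
      intro h
      exact hyI (h ▸ hsub1 (Finset.mem_insert_self y _))
    obtain ⟨m, hmI, hmB, hagree⟩ := hlex B' hB' hBne
    -- y disagrees, so shiftVal i m ≤ shiftVal i y
    have hyB' : y ∈ B' := hsub1 (Finset.mem_insert_self y _)
    have hmy : ¬ (shiftVal i y < shiftVal i m) := by
      intro h
      exact hyI ((hagree y h).mpr hyB')
    have hyval : shiftVal i y ≤ shiftVal i x := (Finset.mem_filter.mp hyP).2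
    have hmP : m ∈ P := by
      simp only [hP, Finset.mem_filter, Finset.mem_univ, true_and]
      omega
    exact hmB (hsub1 (Finset.mem_insert_of_mem (Finset.mem_inter.mpr ⟨hmI, hmP⟩)))

/-- for any matroid `M` on the cyclically ordered ground set
`[n]` with Grassmann necklace `(I_1, …, I_n)`, every basis `B` of `M` satisfies
`I_i ≤_i B` in the Gale order, for every `i`. -/
theorem necklace_gale_dominates_bases
    (M : RankMatroid (Fin n)) (i : Fin n) (I B : Finset (Fin n))
    (hI : LexMinBase M i I) (hB : M.IsBase B) :
    GaleLE i I B := by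
  classical
  intro x
  set P : Finset (Fin n) := Finset.univ.filter fun y => shiftVal i y ≤ shiftVal i x with hP
  have hBP : B.filter (fun b => shiftVal i b ≤ shiftVal i x) = B ∩ P := by
    ext y; simp [hP, Finset.mem_filter, Finset.mem_inter]
  rw [hBP]
  have hBind : M.Indep (B ∩ P) := M.indep_subset hB.1 Finset.inter_subset_left
  calc (B ∩ P).card = M.rk (B ∩ P) := hBind.symm
  _ ≤ M.rk P := M.rk_mono Finset.inter_subset_right
  _ = (I.filter fun a => shiftVal i a ≤ shiftVal i x).card :=
      lexmin_prefix_rank M i I hI x
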